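/- Let H be a complex Hilbert space with inner product ⟨·,·⟩ conjugate-linear in the first argument, and let B : H → H be a bounded, self-adjoint, compact operator which is nonnegative (Re ⟨u, B u⟩ ≥ 0 for all u) and satisfies the trace bound: there is τ ≥ 0 such that for every finite orthonormal family (e_i)_{i ∈ F} in H one has ∑_{i ∈ F} Re ⟨e_i, B e_i⟩ ≤ τ. Then for every ε > 0 there exists a finite-dimensional subspace F ⊆ H with dim F ≤ τ / ε such that Re ⟨u, B u⟩ ≤ ε·‖u‖² for every u in the orthogonal complement of F. -/

import Mathlib

theorem stmt_11 {H : Type*} [NormedAddCommGroup H] [InnerProductSpace ℂ H] [CompleteSpace H]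
    (B : H →L[ℂ] H) (hcpt : IsCompactOperator B)
    (hsa : ∀ u v : H, (inner ℂ u (B v) : ℂ) = inner ℂ (B u) v)
    (hpos : ∀ u : H, 0 ≤ (inner ℂ u (B u) : ℂ).re)
    (τ : ℝ) (hτ : 0 ≤ τ)
    (htr : ∀ s : Finset H, Orthonormal ℂ (fun x : s => (x : H)) →
      ∑ e ∈ s, (inner ℂ (e : H) (B e) : ℂ).re ≤ τ) :
    ∀ ε > 0, ∃ F : Submodule ℂ H, FiniteDimensional ℂ F ∧
      (Module.finrank ℂ F : ℝ) ≤ τ / ε ∧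
      ∀ u ∈ Fᗮ, (inner ℂ u (B u) : ℂ).re ≤ ε * ‖u‖ ^ 2 := by
  intro ε hε
  classical
  -- the collection of "good" orthonormal finsets: each element has quadratic form > ε
  set T : Set (Finset H) := {s | Orthonormal ℂ (fun x : s => (x : H)) ∧
    ∀ e ∈ s, ε < (inner ℂ (e : H) (B e) : ℂ).re} with hT
  -- cardinality bound for good finsets
  have hcard : ∀ s ∈ T, (s.card : ℝ) ≤ τ / ε := by
    intro s hs
    have h1 : s.card • ε ≤ ∑ e ∈ s, (inner ℂ (e : H) (B e) : ℂ).re :=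
      Finset.card_nsmul_le_sum s _ ε (fun e he => (hs.2 e he).le)
    rw [nsmul_eq_mul] at h1
    have h2 := htr s hs.1
    rw [le_div_iff₀ hε]
    linarith
  have hne : T.Nonempty := ⟨∅, by
    refine ⟨⟨fun i => absurd i.2 (Finset.notMem_empty _), fun i j h => absurd i.2 (Finset.notMem_empty _)⟩, fun e he => absurd he (Finset.notMem_empty _)⟩⟩
  -- take a good finset of maximal cardinality
  set A : Set ℕ := Finset.card '' T with hA
  have hAne : A.Nonempty := hne.image _
  have hAbdd : BddAbove A := by
    refine ⟨Nat.floor (τ / ε), ?_⟩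
    rintro n ⟨s, hs, rfl⟩
    exact Nat.le_floor (hcard s hs)
  obtain ⟨s, hsT, hscard⟩ : ∃ s ∈ T, s.card = sSup A := Nat.sSup_mem hAne hAbdd
  have hmax : ∀ t ∈ T, t.card ≤ s.card := by
    intro t ht; rw [hscard]; exact le_csSup hAbdd ⟨t, ht, rfl⟩
  have hon := hsT.1
  have hli := hon.linearIndependent
  refine ⟨Submodule.span ℂ (s : Set H), ?_, ?_, ?_⟩
  · exact FiniteDimensional.span_of_finite ℂ s.finite_toSet
  · rw [finrank_span_finset_eq_card hli]
    exact hcard s hsT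
  · intro u hu
    by_contra hcon
    push_neg at hcon
    have hu0 : u ≠ 0 := by
      rintro rfl
      simp only [map_zero, inner_zero_left, Complex.zero_re, norm_zero] at hcon
      nlinarith
    have hnu : (0 : ℝ) < ‖u‖ := norm_pos_iff.mpr hu0
    set e : H := (‖u‖ : ℂ)⁻¹ • u with he
    have hene : ‖e‖ = 1 := by
      rw [he, norm_smul]
      simp [norm_inv, hnu.ne']
    have heF : e ∈ (Submodule.span ℂ (s : Set H))ᗮ :=
      Submodule.smul_mem _ _ hu
    have hens : e ∉ s := by
      intro hes
      have : e ∈ Submodule.span ℂ (s : Set H) := Submodule.subset_span hes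
      have he0 : e = 0 := by
        have := Submodule.inner_right_of_mem_orthogonal this heF
        rwa [inner_self_eq_zero] at this
      rw [he0] at hene; simp at hene
    -- quadratic form of e
    have heq : (inner ℂ e (B e) : ℂ).re = (inner ℂ u (B u) : ℂ).re / ‖u‖ ^ 2 := by
      have : (inner ℂ e (B e) : ℂ) = ((‖u‖ : ℂ)⁻¹ * (starRingEnd ℂ) (‖u‖ : ℂ)⁻¹) * inner ℂ u (B u) := by
        rw [he, map_smul, inner_smul_left, inner_smul_right]; ring
      rw [this]
      have h1 : ((‖u‖ : ℂ)⁻¹ * (starRingEnd ℂ) (‖u‖ : ℂ)⁻¹) = ((‖u‖ ^ 2)⁻¹ : ℝ) := by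
        simp [Complex.conj_ofReal, ← Complex.ofReal_inv, ← Complex.ofReal_mul, sq]
      rw [h1, Complex.re_ofReal_mul]
      field_simp
    have hegt : ε < (inner ℂ e (B e) : ℂ).re := by
      rw [heq]
      rw [lt_div_iff₀ (by positivity)]
      linarith [hcon]
    -- extend s by e : contradiction with maximality
    have hext : insert e s ∈ T := by
      constructor
      · rw [show (fun x : (insert e s : Finset H) => (x : H)) = (Subtype.val : ((insert e s : Finset H) : Set H) → H) from rfl]
        rw [orthonormal_subtype_iff_ite]
        intro v hv w hw
        simp only [Finset.coe_insert, Set.mem_insert_iff, Finset.mem_coe] at hv hw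
        have horth : ∀ x ∈ s, (inner ℂ e x : ℂ) = 0 ∧ (inner ℂ x e : ℂ) = 0 := by
          intro x hx
          have hx' : (x : H) ∈ Submodule.span ℂ (s : Set H) := Submodule.subset_span hx
          constructor
          · rw [← inner_conj_symm]
            rw [Submodule.inner_right_of_mem_orthogonal hx' heF]
            simp
          · exact Submodule.inner_right_of_mem_orthogonal hx' heF
        have honite := (orthonormal_subtype_iff_ite (𝕜 := ℂ) (s := (s : Set H))).mp hon
        rcases hv with rfl | hv <;> rcases hw with rfl | hw
        · simp [inner_self_eq_norm_sq_to_K, hene]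
        · rw [(horth w hw).1, if_neg]
          rintro rfl; exact hens hw
        · rw [(horth v hv).2, if_neg]
          rintro rfl; exact hens hv
        · exact honite v hv w hw
      · intro x hx
        rcases Finset.mem_insert.mp hx with rfl | hx
        · exact hegt
        · exact hsT.2 x hx
    have := hmax _ hext
    rw [Finset.card_insert_of_notMem hens] at this
    omega
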